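/- arXiv:2007.04876 — 11 statements merged into one kernel-verified Lean document; each statement's English description precedes it below -/
import Mathlib

section
/- Let M ≥ 0 be a real number and let a_0, a_1, a_2, … be a sequence of real numbers with a_0 ≥ 0 such that a_i ≥ 1 + √(M · a_{i−1}) for all integers i ≥ 1. Then a_τ ≥ M^{1 − 2^{−τ+1}} for all integers τ ≥ 1. -/
/-- growth of a sequence satisfying `a i ≥ 1 + √(M * a (i-1))`. -/
theorem seq_growth (M : ℝ) (hM : 0 ≤ M) (a : ℕ → ℝ) (ha0 : 0 ≤ a 0)
    (hrec : ∀ i : ℕ, 1 ≤ i → a i ≥ 1 + Real.sqrt (M * a (i - 1))) :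
    ∀ τ : ℕ, 1 ≤ τ → a τ ≥ M ^ ((1 : ℝ) - (2 : ℝ) ^ (-(τ : ℝ) + 1)) := by
  have h1 : ∀ τ : ℕ, 1 ≤ τ → (1 : ℝ) ≤ a τ := by
    intro τ hτ
    have h := hrec τ hτ
    have hs := Real.sqrt_nonneg (M * a (τ - 1))
    linarith
  rcases le_or_gt M 1 with hM1 | hM1
  · intro τ hτ
    have he : 0 ≤ (1 : ℝ) - (2 : ℝ) ^ (-(τ : ℝ) + 1) := by
      have h2 : (2 : ℝ) ^ (-(τ : ℝ) + 1) ≤ (2 : ℝ) ^ (0 : ℝ) := by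
        apply Real.rpow_le_rpow_of_exponent_le one_le_two
        have : (1 : ℝ) ≤ (τ : ℝ) := by exact_mod_cast hτ
        linarith
      rw [Real.rpow_zero] at h2
      linarith
    calc M ^ ((1 : ℝ) - (2 : ℝ) ^ (-(τ : ℝ) + 1)) ≤ 1 := Real.rpow_le_one hM hM1 he
      _ ≤ a τ := h1 τ hτ
  · have hM0 : (0 : ℝ) < M := by linarith
    intro τ hτ
    induction τ with
    | zero => omega
    | succ n ih =>
      rcases Nat.lt_or_ge n 1 with hn | hn
      · interval_cases n
        simp only [Nat.cast_one, Nat.zero_add]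
        rw [show (-(1 : ℝ) + 1) = 0 by ring, Real.rpow_zero,
          show ((1 : ℝ) - 1) = 0 by ring, Real.rpow_zero]
        exact h1 1 le_rfl
      · have ihn := ih hn
        set e : ℝ := (1 : ℝ) - (2 : ℝ) ^ (-(n : ℝ) + 1) with he
        have hrecn := hrec (n + 1) (by omega)
        simp only [Nat.add_sub_cancel] at hrecn
        have han : (0 : ℝ) ≤ a n := le_trans zero_le_one (h1 n hn)
        have hsq : Real.sqrt (M * M ^ e) ≤ Real.sqrt (M * a n) := by
          apply Real.sqrt_le_sqrt
          exact mul_le_mul_of_nonneg_left ihn hM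
        have hval : Real.sqrt (M * M ^ e) = M ^ ((1 + e) / 2) := by
          rw [show M * M ^ e = M ^ ((1 : ℝ) + e) by
              rw [Real.rpow_add hM0, Real.rpow_one]]
          rw [Real.sqrt_eq_rpow, ← Real.rpow_mul hM,
            show ((1 : ℝ) + e) * (1 / 2) = (1 + e) / 2 by ring]
        have hexp : (1 + e) / 2 = (1 : ℝ) - (2 : ℝ) ^ (-((n + 1 : ℕ) : ℝ) + 1) := by
          have h2 : (2 : ℝ) ^ (-(n : ℝ) + 1) = (2 : ℝ) ^ (-(n : ℝ)) * 2 := by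
            rw [Real.rpow_add (by norm_num : (0:ℝ) < 2), Real.rpow_one]
          push_cast
          rw [he, h2]
          ring_nf
        have hsqnn : (0 : ℝ) ≤ Real.sqrt (M * a n) := Real.sqrt_nonneg _
        calc M ^ ((1 : ℝ) - (2 : ℝ) ^ (-((n + 1 : ℕ) : ℝ) + 1))
            = M ^ ((1 + e) / 2) := by rw [hexp]
          _ = Real.sqrt (M * M ^ e) := hval.symm
          _ ≤ Real.sqrt (M * a n) := hsq
          _ ≤ 1 + Real.sqrt (M * a n) := by linarith
          _ ≤ a (n + 1) := hrecn
end

section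
/- Let S* be a subset of [N] with |S*| ≤ K attaining the maximum F(v) = max_{S ⊆ [N], |S| ≤ K} R(S, v), let r* = R(S*, v), and define g_i = v_i(r_i − r*) for each i ∈ [N]. Then Σ_{i∈S*} g_i = r*, and for every subset S ⊆ [N] with |S| ≤ K one has Σ_{i∈S} g_i ≤ r*; in particular S* maximizes Σ_{i∈S} g_i over all subsets of [N] of cardinality at most K. -/
/-- Expected revenue of assortment `S` under the MNL model with rewards `r`
and preference weights `v`. -/
noncomputable def Rev {N : ℕ} (r v : Fin N → ℝ) (S : Finset (Fin N)) : ℝ :=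
  (∑ i ∈ S, r i * v i) / (1 + ∑ i ∈ S, v i)

/-- if `S*` attains the optimal revenue `r* = F(v)` and
`g i = v i * (r i - r*)`, then `∑_{i ∈ S*} g i = r*` and every feasible `S`
has `∑_{i ∈ S} g i ≤ r*`; in particular `S*` maximizes `∑_{i ∈ S} g i`. -/
theorem optimal_assortment_linearization
    (N K : ℕ) (hN : 1 ≤ N) (hK1 : 1 ≤ K) (hKN : K ≤ N)
    (r v : Fin N → ℝ) (hr : ∀ i, 0 ≤ r i ∧ r i ≤ 1) (hv : ∀ i, 0 ≤ v i)
    (Sstar : Finset (Fin N)) (hSstarCard : Sstar.card ≤ K)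
    (hSstarOpt : ∀ S : Finset (Fin N), S.card ≤ K → Rev r v S ≤ Rev r v Sstar)
    (rstar : ℝ) (hrstar : rstar = Rev r v Sstar)
    (g : Fin N → ℝ) (hg : ∀ i, g i = v i * (r i - rstar)) :
    (∑ i ∈ Sstar, g i) = rstar ∧
    (∀ S : Finset (Fin N), S.card ≤ K → (∑ i ∈ S, g i) ≤ rstar) ∧
    (∀ S : Finset (Fin N), S.card ≤ K → (∑ i ∈ S, g i) ≤ ∑ i ∈ Sstar, g i) := by
  have hpos : ∀ S : Finset (Fin N), (0:ℝ) < 1 + ∑ i ∈ S, v i := by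
    intro S
    have : (0:ℝ) ≤ ∑ i ∈ S, v i := Finset.sum_nonneg fun i _ => hv i
    linarith
  have hsum : ∀ S : Finset (Fin N),
      (∑ i ∈ S, g i) = (∑ i ∈ S, r i * v i) - rstar * ∑ i ∈ S, v i := by
    intro S
    simp only [hg, mul_sub, Finset.sum_sub_distrib, Finset.mul_sum]
    congr 1
    · exact Finset.sum_congr rfl fun i _ => mul_comm _ _
    · exact Finset.sum_congr rfl fun i _ => mul_comm _ _
  have hstar : (∑ i ∈ Sstar, g i) = rstar := by
    have h := hpos Sstar
    have : rstar * (1 + ∑ i ∈ Sstar, v i) = ∑ i ∈ Sstar, r i * v i := by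
      rw [hrstar, Rev, div_mul_cancel₀ _ (ne_of_gt h)]
    rw [hsum]; nlinarith
  have hle : ∀ S : Finset (Fin N), S.card ≤ K → (∑ i ∈ S, g i) ≤ rstar := by
    intro S hS
    have h := hpos S
    have h2 : Rev r v S ≤ rstar := hrstar ▸ hSstarOpt S hS
    have h3 : (∑ i ∈ S, r i * v i) ≤ rstar * (1 + ∑ i ∈ S, v i) := by
      rw [Rev] at h2
      calc (∑ i ∈ S, r i * v i) = (∑ i ∈ S, r i * v i) / (1 + ∑ i ∈ S, v i) * (1 + ∑ i ∈ S, v i) := by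
            rw [div_mul_cancel₀ _ (ne_of_gt h)]
        _ ≤ rstar * (1 + ∑ i ∈ S, v i) := by
            exact mul_le_mul_of_nonneg_right h2 (le_of_lt h)
    rw [hsum]; nlinarith
  exact ⟨hstar, hle, fun S hS => hstar ▸ hle S hS⟩
end

section
/- Let r* = F(v) and define g_i = v_i(r_i − r*) for each i ∈ [N]. If S_0 ⊆ [N] with |S_0| ≤ K maximizes Σ_{i∈S} g_i over all subsets S ⊆ [N] with |S| ≤ K, then R(S_0, v) = r*; that is, S_0 is an optimal assortment achieving F(v). -/
/-- The optimal expected revenue `F(v) = max_{S ⊆ [N], |S| ≤ K} R(S, v)`. -/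
noncomputable def Fopt (N K : ℕ) (r v : Fin N → ℝ) : ℝ :=
  Finset.sup'
    ((Finset.univ : Finset (Fin N)).powerset.filter fun S => S.card ≤ K)
    ⟨∅, by simp⟩ (Rev r v)

/-- with `r* = F(v)` and `g i = v i * (r i - r*)`, any feasible
`S₀` maximizing `∑_{i ∈ S} g i` over feasible sets satisfies `R(S₀, v) = r*`. -/
theorem linear_maximizer_is_optimal_assortment
    (N K : ℕ) (hN : 1 ≤ N) (hK1 : 1 ≤ K) (hKN : K ≤ N)
    (r v : Fin N → ℝ) (hr : ∀ i, 0 ≤ r i ∧ r i ≤ 1) (hv : ∀ i, 0 ≤ v i)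
    (rstar : ℝ) (hrstar : rstar = Fopt N K r v)
    (g : Fin N → ℝ) (hg : ∀ i, g i = v i * (r i - rstar))
    (S₀ : Finset (Fin N)) (hS₀Card : S₀.card ≤ K)
    (hS₀Opt : ∀ S : Finset (Fin N), S.card ≤ K → (∑ i ∈ S, g i) ≤ ∑ i ∈ S₀, g i) :
    Rev r v S₀ = rstar := by

  have hpos : ∀ S : Finset (Fin N), (0:ℝ) < 1 + ∑ i ∈ S, v i := by
    intro S
    have := Finset.sum_nonneg (fun i _ => hv i) (s := S)
    linarith
  have hD : ∀ S : Finset (Fin N),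
      ∑ i ∈ S, g i = ∑ i ∈ S, r i * v i - rstar * ∑ i ∈ S, v i := by
    intro S
    rw [Finset.mul_sum, ← Finset.sum_sub_distrib]
    exact Finset.sum_congr rfl fun i _ => by rw [hg]; ring
  set Fam := ((Finset.univ : Finset (Fin N)).powerset.filter fun S => S.card ≤ K)
    with hFam
  have hmem : ∀ S : Finset (Fin N), S.card ≤ K → S ∈ Fam := by
    intro S hS
    simp [hFam, hS]
  have hle : ∀ S : Finset (Fin N), S.card ≤ K → Rev r v S ≤ rstar := by
    intro S hS
    rw [hrstar]
    exact Finset.le_sup' _ (hmem S hS)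
  have hDle : ∀ S : Finset (Fin N), S.card ≤ K → ∑ i ∈ S, g i ≤ rstar := by
    intro S hS
    have h1 := hle S hS
    rw [Rev, div_le_iff₀ (hpos S)] at h1
    rw [hD]
    nlinarith [hpos S]
  obtain ⟨Sstar, hSstarMem, hSstarEq⟩ :=
    Finset.exists_mem_eq_sup' (⟨∅, by simp [hFam]⟩ : Fam.Nonempty) (Rev r v)
  have hSstarCard : Sstar.card ≤ K := by
    simp [hFam] at hSstarMem
    exact hSstarMem
  have hSstarRev : Rev r v Sstar = rstar := by
    rw [hrstar]; exact hSstarEq.symm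
  have hDstar : ∑ i ∈ Sstar, g i = rstar := by
    have h1 : (∑ i ∈ Sstar, r i * v i) / (1 + ∑ i ∈ Sstar, v i) = rstar := hSstarRev
    rw [div_eq_iff (ne_of_gt (hpos Sstar))] at h1
    rw [hD]
    nlinarith
  have hD₀ : ∑ i ∈ S₀, g i = rstar :=
    le_antisymm (hDle S₀ hS₀Card) (hDstar ▸ hS₀Opt Sstar hSstarCard)
  rw [hD] at hD₀
  rw [Rev, div_eq_iff (ne_of_gt (hpos S₀))]
  nlinarith
end

section
/- Let v and v̂ be two preference vectors with 0 ≤ v_i ≤ v̂_i for all i ∈ [N]. Then F(v̂) ≥ F(v); that is, the optimal expected revenue F(v) = max_{S ⊆ [N], |S| ≤ K} R(S, v) is monotonically non-decreasing in the preference vector. -/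
/-- the optimal expected revenue is monotone non-decreasing in the
preference vector. -/
theorem Fopt_monotone
    (N K : ℕ) (hN : 1 ≤ N) (hK1 : 1 ≤ K) (hKN : K ≤ N)
    (r v vhat : Fin N → ℝ) (hr : ∀ i, 0 ≤ r i ∧ r i ≤ 1)
    (hv : ∀ i, 0 ≤ v i) (hle : ∀ i, v i ≤ vhat i) :
    Fopt N K r v ≤ Fopt N K r vhat := by
  classical
  set ρ := Fopt N K r v with hρdef
  have hne : (((Finset.univ : Finset (Fin N)).powerset.filter
      fun S => S.card ≤ K)).Nonempty := ⟨∅, by simp⟩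
  obtain ⟨S, hSmem, hSeq⟩ := Finset.exists_mem_eq_sup' hne (Rev r v)
  have hScard : S.card ≤ K := (Finset.mem_filter.mp hSmem).2
  have hρ0 : 0 ≤ ρ := by
    have h : Rev r v ∅ ≤ ρ := Finset.le_sup' (Rev r v) (by simp)
    simpa [Rev] using h
  have hvhat0 : ∀ i, 0 ≤ vhat i := fun i => (hv i).trans (hle i)
  have hsv : (0:ℝ) ≤ ∑ i ∈ S, v i := Finset.sum_nonneg fun i _ => hv i
  have hd : (0:ℝ) < 1 + ∑ i ∈ S, v i := by linarith
  have hsum : ∑ i ∈ S, r i * v i = ρ * (1 + ∑ i ∈ S, v i) := by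
    have h : (∑ i ∈ S, r i * v i) / (1 + ∑ i ∈ S, v i) = ρ :=
      (show ρ = Rev r v S from hSeq).symm
    field_simp at h
    linarith
  set T := S.filter (fun i => ρ ≤ r i) with hT
  -- step 1: ∑_{i∈S} (r i - ρ) * v i = ρ
  have hstep1 : ∑ i ∈ S, (r i - ρ) * v i = ρ := by
    have : ∑ i ∈ S, (r i - ρ) * v i
        = (∑ i ∈ S, r i * v i) - ρ * ∑ i ∈ S, v i := by
      rw [Finset.mul_sum, ← Finset.sum_sub_distrib]
      exact Finset.sum_congr rfl fun i _ => by ring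
    rw [this, hsum]; ring
  -- step 2: ρ ≤ ∑_{i∈T} (r i - ρ) * v i
  have hsplit := Finset.sum_filter_add_sum_filter_not S (fun i => ρ ≤ r i)
      (fun i => (r i - ρ) * v i)
  have hneg : ∑ i ∈ S.filter (fun i => ¬ ρ ≤ r i), (r i - ρ) * v i ≤ 0 :=
    Finset.sum_nonpos fun i hi => by
      have hi' := Finset.mem_filter.mp hi
      have : r i - ρ ≤ 0 := by
        have := hi'.2
        push_neg at this
        linarith
      exact mul_nonpos_of_nonpos_of_nonneg this (hv i)
  have hstep2 : ρ ≤ ∑ i ∈ T, (r i - ρ) * v i := by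
    rw [hT]; linarith [hstep1, hsplit, hneg]
  -- step 3: monotone in weights on T
  have hstep3 : ∑ i ∈ T, (r i - ρ) * v i ≤ ∑ i ∈ T, (r i - ρ) * vhat i :=
    Finset.sum_le_sum fun i hi => by
      have hi' := Finset.mem_filter.mp hi
      have hri : 0 ≤ r i - ρ := by linarith [hi'.2]
      exact mul_le_mul_of_nonneg_left (hle i) hri
  -- conclude Rev r vhat T ≥ ρ
  have hsvh : (0:ℝ) ≤ ∑ i ∈ T, vhat i := Finset.sum_nonneg fun i _ => hvhat0 i
  have hd' : (0:ℝ) < 1 + ∑ i ∈ T, vhat i := by linarith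
  have hrev : ρ ≤ Rev r vhat T := by
    rw [Rev, le_div_iff₀ hd']
    have hexp : ∑ i ∈ T, r i * vhat i
        = (∑ i ∈ T, (r i - ρ) * vhat i) + ρ * ∑ i ∈ T, vhat i := by
      rw [Finset.mul_sum, ← Finset.sum_add_distrib]
      exact Finset.sum_congr rfl fun i _ => by ring
    rw [hexp]
    nlinarith [hstep2, hstep3]
  have hTmem : T ∈ ((Finset.univ : Finset (Fin N)).powerset.filter
      fun S => S.card ≤ K) := by
    refine Finset.mem_filter.mpr ⟨Finset.mem_powerset.mpr (Finset.subset_univ _), ?_⟩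
    exact (Finset.card_filter_le S _).trans hScard
  exact hrev.trans (Finset.le_sup' (Rev r vhat) hTmem)
end

section
/- Let S ⊆ [N] be any subset, and let v, v̂ be preference vectors with r_i ∈ [0,1] and 0 ≤ v_i ≤ v̂_i for all i ∈ [N]. Then (1 + Σ_{i∈S} v_i) · (R(S, v̂) − R(S, v)) ≤ Σ_{i∈S} (v̂_i − v_i). -/
/-- for any assortment `S` and preference vectors `v ≤ v̂`,
`(1 + ∑_{i ∈ S} v i) * (R(S, v̂) - R(S, v)) ≤ ∑_{i ∈ S} (v̂ i - v i)`. -/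
theorem revenue_gap_bounded_by_ucb_gap
    (N : ℕ) (hN : 1 ≤ N)
    (r v vhat : Fin N → ℝ) (hr : ∀ i, 0 ≤ r i ∧ r i ≤ 1)
    (hv : ∀ i, 0 ≤ v i) (hle : ∀ i, v i ≤ vhat i)
    (S : Finset (Fin N)) :
    (1 + ∑ i ∈ S, v i) * (Rev r vhat S - Rev r v S) ≤ ∑ i ∈ S, (vhat i - v i) := by
  set A : ℝ := ∑ i ∈ S, r i * v i with hA
  set B : ℝ := ∑ i ∈ S, v i with hB
  set A' : ℝ := ∑ i ∈ S, r i * vhat i with hA'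
  set B' : ℝ := ∑ i ∈ S, vhat i with hB'
  have hB0 : 0 ≤ B := Finset.sum_nonneg fun i _ => hv i
  have hBB' : B ≤ B' := Finset.sum_le_sum fun i _ => hle i
  have hB'0 : 0 ≤ B' := le_trans hB0 hBB'
  have h1B : (0:ℝ) < 1 + B := by linarith
  have h1B' : (0:ℝ) < 1 + B' := by linarith
  have hA'0 : 0 ≤ A' :=
    Finset.sum_nonneg fun i _ => mul_nonneg (hr i).1 (le_trans (hv i) (hle i))
  calc (1 + B) * (Rev r vhat S - Rev r v S)
      = (1 + B) / (1 + B') * A' - A := by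
        unfold Rev
        rw [← hA, ← hB, ← hA', ← hB']
        field_simp
    _ ≤ A' - A := by
        have hq : (1 + B) / (1 + B') ≤ 1 := by
          rw [div_le_one h1B']; linarith
        nlinarith
    _ = ∑ i ∈ S, (r i * vhat i - r i * v i) := by
        rw [hA, hA', Finset.sum_sub_distrib]
    _ ≤ ∑ i ∈ S, (vhat i - v i) := by
        apply Finset.sum_le_sum
        intro i _
        have := hr i
        have h2 := hle i
        nlinarith [hv i]
end

section
/- Let θ* = F(v) = max_{S ⊆ [N], |S| ≤ K} R(S, v). Then every subset S ⊆ [N] with |S| ≤ K that maximizes Σ_{i∈S} v_i(r_i − θ*) over all subsets of cardinality at most K satisfies R(S, v) = θ*; that is, θ* is a fixed point: G(θ*) = θ*, where G(θ) denotes the revenue R(S_θ, v) of a maximizer S_θ of Σ_{i∈S} v_i(r_i − θ). -/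
/-- `θ* = F(v)` is a fixed point: every feasible maximizer of
`∑_{i ∈ S} v i * (r i - θ*)` has revenue exactly `θ*`. -/
theorem Fopt_is_fixed_point
    (N K : ℕ) (hN : 1 ≤ N) (hK1 : 1 ≤ K) (hKN : K ≤ N)
    (r v : Fin N → ℝ) (hr : ∀ i, 0 ≤ r i ∧ r i ≤ 1) (hv : ∀ i, 0 ≤ v i)
    (θstar : ℝ) (hθstar : θstar = Fopt N K r v)
    (S : Finset (Fin N)) (hScard : S.card ≤ K)
    (hSopt : ∀ S' : Finset (Fin N), S'.card ≤ K →
      (∑ i ∈ S', v i * (r i - θstar)) ≤ ∑ i ∈ S, v i * (r i - θstar)) :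
    Rev r v S = θstar := by
  have dpos : ∀ T : Finset (Fin N), 0 < 1 + ∑ i ∈ T, v i := by
    intro T
    have : (0:ℝ) ≤ ∑ i ∈ T, v i := Finset.sum_nonneg fun i _ => hv i
    linarith
  have key : ∀ T : Finset (Fin N),
      ∑ i ∈ T, v i * (r i - θstar)
        = (Rev r v T - θstar) * (1 + ∑ i ∈ T, v i) + θstar := by
    intro T
    have hd := (dpos T).ne'
    have : ∑ i ∈ T, v i * (r i - θstar)
        = (∑ i ∈ T, r i * v i) - θstar * ∑ i ∈ T, v i := by
      rw [Finset.mul_sum, ← Finset.sum_sub_distrib]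
      exact Finset.sum_congr rfl fun i _ => by ring
    rw [this, Rev]
    field_simp
    ring
  -- S is feasible, so Rev S ≤ θ*
  have hmem : ∀ T : Finset (Fin N), T.card ≤ K →
      T ∈ (Finset.univ : Finset (Fin N)).powerset.filter fun S => S.card ≤ K := by
    intro T hT
    simp [Finset.mem_filter, Finset.mem_powerset, hT]
  have hle : Rev r v S ≤ θstar := by
    rw [hθstar]
    exact Finset.le_sup' (Rev r v) (hmem S hScard)
  -- there is a maximizer S0 with Rev S0 = θ*
  obtain ⟨S0, hS0mem, hS0eq⟩ := Finset.exists_mem_eq_sup'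
    (⟨∅, by simp⟩ : ((Finset.univ : Finset (Fin N)).powerset.filter
      fun S => S.card ≤ K).Nonempty) (Rev r v)
  have hS0card : S0.card ≤ K := (Finset.mem_filter.mp hS0mem).2
  have hS0rev : Rev r v S0 = θstar := by rw [hθstar, Fopt, hS0eq]
  have hS0sum : ∑ i ∈ S0, v i * (r i - θstar) = θstar := by
    rw [key S0, hS0rev]; ring
  have hge : θstar ≤ ∑ i ∈ S, v i * (r i - θstar) := by
    have := hSopt S0 hS0card; linarith
  have hsle : ∑ i ∈ S, v i * (r i - θstar) ≤ θstar := by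
    rw [key S]
    nlinarith [dpos S, hle]
  have heq : ∑ i ∈ S, v i * (r i - θstar) = θstar := le_antisymm hsle hge
  have := key S
  rw [heq] at this
  have h0 : (Rev r v S - θstar) * (1 + ∑ i ∈ S, v i) = 0 := by linarith
  rcases mul_eq_zero.mp h0 with h | h
  · linarith
  · exact absurd h (dpos S).ne'
end

section
/- Let θ* = F(v) = max_{S ⊆ [N], |S| ≤ K} R(S, v) and let θ ∈ ℝ with θ < θ*. Then every subset S_θ ⊆ [N] with |S_θ| ≤ K that maximizes Σ_{i∈S} v_i(r_i − θ) over all subsets of cardinality at most K satisfies R(S_θ, v) > θ. -/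
/-- if `θ < θ* = F(v)`, every feasible maximizer `S_θ` of
`∑_{i ∈ S} v i * (r i - θ)` satisfies `R(S_θ, v) > θ`. -/
theorem below_fixed_point
    (N K : ℕ) (hN : 1 ≤ N) (hK1 : 1 ≤ K) (hKN : K ≤ N)
    (r v : Fin N → ℝ) (hr : ∀ i, 0 ≤ r i ∧ r i ≤ 1) (hv : ∀ i, 0 ≤ v i)
    (θstar : ℝ) (hθstar : θstar = Fopt N K r v)
    (θ : ℝ) (hθ : θ < θstar)
    (Sθ : Finset (Fin N)) (hScard : Sθ.card ≤ K)
    (hSopt : ∀ S' : Finset (Fin N), S'.card ≤ K →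
      (∑ i ∈ S', v i * (r i - θ)) ≤ ∑ i ∈ Sθ, v i * (r i - θ)) :
    θ < Rev r v Sθ := by
  -- key equivalence: R(S) > θ ↔ ∑ v(r-θ) > θ, since 1 + ∑ v > 0
  have hpos : ∀ S : Finset (Fin N), (0:ℝ) < 1 + ∑ i ∈ S, v i := by
    intro S
    have : (0:ℝ) ≤ ∑ i ∈ S, v i := Finset.sum_nonneg fun i _ => hv i
    linarith
  have key : ∀ S : Finset (Fin N),
      (θ < Rev r v S ↔ θ < ∑ i ∈ S, v i * (r i - θ)) := by
    intro S
    unfold Rev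
    rw [lt_div_iff₀ (hpos S)]
    constructor <;> intro h
    · have : ∑ i ∈ S, v i * (r i - θ) = (∑ i ∈ S, r i * v i) - θ * (∑ i ∈ S, v i) := by
        rw [Finset.mul_sum, ← Finset.sum_sub_distrib]; apply Finset.sum_congr rfl
        intro i _; ring
      rw [this]; nlinarith
    · have : ∑ i ∈ S, v i * (r i - θ) = (∑ i ∈ S, r i * v i) - θ * (∑ i ∈ S, v i) := by
        rw [Finset.mul_sum, ← Finset.sum_sub_distrib]; apply Finset.sum_congr rfl
        intro i _; ring
      rw [this] at h; nlinarith
  -- obtain a maximizer S* of Rev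
  obtain ⟨Sstar, hmem, hSstar⟩ := Finset.exists_mem_eq_sup'
    (⟨∅, by simp⟩ : ((Finset.univ : Finset (Fin N)).powerset.filter
      fun S => S.card ≤ K).Nonempty) (Rev r v)
  have hScardstar : Sstar.card ≤ K := (Finset.mem_filter.mp hmem).2
  have hθS : θ < Rev r v Sstar := by
    rw [hθstar, Fopt, hSstar] at hθ; exact hθ
  have h1 : θ < ∑ i ∈ Sstar, v i * (r i - θ) := (key Sstar).mp hθS
  have h2 : θ < ∑ i ∈ Sθ, v i * (r i - θ) :=
    lt_of_lt_of_le h1 (hSopt Sstar hScardstar)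
  exact (key Sθ).mpr h2
end

section
/- Let θ* = F(v) = max_{S ⊆ [N], |S| ≤ K} R(S, v). If θ ∈ ℝ is such that some subset S_θ ⊆ [N] with |S_θ| ≤ K maximizing Σ_{i∈S} v_i(r_i − θ) over all subsets of cardinality at most K satisfies R(S_θ, v) = θ, then θ = θ*; that is, θ* is the unique fixed point of θ ↦ R(S_θ, v). -/
/-- `θ* = F(v)` is the unique fixed point of `θ ↦ R(S_θ, v)`. -/
theorem fixed_point_unique
    (N K : ℕ) (hN : 1 ≤ N) (hK1 : 1 ≤ K) (hKN : K ≤ N)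
    (r v : Fin N → ℝ) (hr : ∀ i, 0 ≤ r i ∧ r i ≤ 1) (hv : ∀ i, 0 ≤ v i)
    (θstar : ℝ) (hθstar : θstar = Fopt N K r v)
    (θ : ℝ)
    (Sθ : Finset (Fin N)) (hScard : Sθ.card ≤ K)
    (hSopt : ∀ S' : Finset (Fin N), S'.card ≤ K →
      (∑ i ∈ S', v i * (r i - θ)) ≤ ∑ i ∈ Sθ, v i * (r i - θ))
    (hfix : Rev r v Sθ = θ) :
    θ = θstar := by
  have hpos : ∀ S : Finset (Fin N), (0:ℝ) < 1 + ∑ i ∈ S, v i := by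
    intro S
    have : (0:ℝ) ≤ ∑ i ∈ S, v i := Finset.sum_nonneg fun i _ => hv i
    linarith
  have hsub : ∀ S : Finset (Fin N),
      ∑ i ∈ S, v i * (r i - θ) = ∑ i ∈ S, r i * v i - θ * ∑ i ∈ S, v i := by
    intro S
    rw [Finset.mul_sum, ← Finset.sum_sub_distrib]
    exact Finset.sum_congr rfl fun i _ => by ring
  have hfix' : ∑ i ∈ Sθ, r i * v i = θ * (1 + ∑ i ∈ Sθ, v i) := by
    have h := hfix
    unfold Rev at h
    field_simp [ne_of_gt (hpos Sθ)] at h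
    linarith
  have hkey : ∑ i ∈ Sθ, v i * (r i - θ) = θ := by
    rw [hsub, hfix']; ring
  have hle : ∀ S : Finset (Fin N), S.card ≤ K → Rev r v S ≤ θ := by
    intro S hS
    have h1 := hSopt S hS
    rw [hkey, hsub] at h1
    unfold Rev
    rw [div_le_iff₀ (hpos S)]
    nlinarith
  have hmem : Sθ ∈ ((Finset.univ : Finset (Fin N)).powerset.filter
      fun S => S.card ≤ K) := by
    simp [hScard]
  have h1 : θ ≤ θstar := by
    rw [hθstar]
    calc θ = Rev r v Sθ := hfix.symm
    _ ≤ _ := Finset.le_sup' _ hmem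
  have h2 : θstar ≤ θ := by
    rw [hθstar]
    apply Finset.sup'_le
    intro S hS
    simp only [Finset.mem_filter] at hS
    exact hle S hS.2
  linarith
end

section
/- Let θ ∈ [0,1], let v, v̂ be preference vectors with r_i ∈ [0,1] and 0 ≤ v_i ≤ v̂_i for all i ∈ [N], and suppose there exists a subset S' ⊆ [N] with |S'| ≤ K such that R(S', v) ≥ θ. Let Ŝ_θ ⊆ [N] with |Ŝ_θ| ≤ K be any subset maximizing Σ_{i∈S} v̂_i(r_i − θ) over all subsets S ⊆ [N] of cardinality at most K. Then (1 + Σ_{i∈Ŝ_θ} v_i) · (θ − R(Ŝ_θ, v)) ≤ Σ_{i∈Ŝ_θ} (v̂_i − v_i). -/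
/-- if some feasible assortment has true revenue at least `θ`,
then for any feasible maximizer `Ŝ_θ` of `∑_{i ∈ S} v̂ i * (r i - θ)` (with
UCB weights `v̂ ≥ v`), the shortfall of its true revenue below `θ` is
controlled by the UCB gaps. -/
theorem ucb_maximizer_revenue_shortfall
    (N K : ℕ) (hN : 1 ≤ N) (hK1 : 1 ≤ K) (hKN : K ≤ N)
    (r v vhat : Fin N → ℝ) (hr : ∀ i, 0 ≤ r i ∧ r i ≤ 1)
    (hv : ∀ i, 0 ≤ v i) (hle : ∀ i, v i ≤ vhat i)
    (θ : ℝ) (hθ0 : 0 ≤ θ) (hθ1 : θ ≤ 1)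
    (hfeas : ∃ S' : Finset (Fin N), S'.card ≤ K ∧ θ ≤ Rev r v S')
    (Shat : Finset (Fin N)) (hShatCard : Shat.card ≤ K)
    (hShatOpt : ∀ S : Finset (Fin N), S.card ≤ K →
      (∑ i ∈ S, vhat i * (r i - θ)) ≤ ∑ i ∈ Shat, vhat i * (r i - θ)) :
    (1 + ∑ i ∈ Shat, v i) * (θ - Rev r v Shat) ≤ ∑ i ∈ Shat, (vhat i - v i) := by
  obtain ⟨S', hS'card, hS'rev⟩ := hfeas
  have hpos : ∀ S : Finset (Fin N), (0:ℝ) < 1 + ∑ i ∈ S, v i := by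
    intro S
    have : (0:ℝ) ≤ ∑ i ∈ S, v i := Finset.sum_nonneg fun i _ => hv i
    linarith
  -- θ ≤ ∑_{S'} v i (r i - θ)
  have h1 : θ ≤ ∑ i ∈ S', v i * (r i - θ) := by
    have hd := hpos S'
    have h' : θ * (1 + ∑ i ∈ S', v i) ≤ ∑ i ∈ S', r i * v i := by
      have := hS'rev
      rw [Rev, le_div_iff₀ hd] at this
      exact this
    have hexp : ∑ i ∈ S', v i * (r i - θ)
        = (∑ i ∈ S', r i * v i) - θ * ∑ i ∈ S', v i := by
      rw [Finset.mul_sum, ← Finset.sum_sub_distrib]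
      exact Finset.sum_congr rfl fun i _ => by ring
    linarith
  -- restrict to nonnegative-part subset
  set T := S'.filter (fun i => θ ≤ r i) with hT
  have hTcard : T.card ≤ K := le_trans (Finset.card_filter_le _ _) hS'card
  have h2 : ∑ i ∈ S', v i * (r i - θ) ≤ ∑ i ∈ T, v i * (r i - θ) := by
    have := Finset.sum_filter_add_sum_filter_not S' (fun i => θ ≤ r i)
      (fun i => v i * (r i - θ))
    have hneg : ∑ i ∈ S'.filter (fun i => ¬ θ ≤ r i), v i * (r i - θ) ≤ 0 := by
      apply Finset.sum_nonpos
      intro i hi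
      have := (Finset.mem_filter.mp hi).2
      have : r i - θ ≤ 0 := by push_neg at this; linarith
      exact mul_nonpos_of_nonneg_of_nonpos (hv i) this
    linarith
  have h3 : ∑ i ∈ T, v i * (r i - θ) ≤ ∑ i ∈ T, vhat i * (r i - θ) := by
    apply Finset.sum_le_sum
    intro i hi
    have hri := (Finset.mem_filter.mp hi).2
    exact mul_le_mul_of_nonneg_right (hle i) (by linarith)
  have h4 : θ ≤ ∑ i ∈ Shat, vhat i * (r i - θ) :=
    le_trans (le_trans (le_trans h1 h2) h3) (hShatOpt T hTcard)
  have h5 : ∑ i ∈ Shat, (vhat i - v i) * (r i - θ) ≤ ∑ i ∈ Shat, (vhat i - v i) := by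
    apply Finset.sum_le_sum
    intro i _
    have h6 : vhat i - v i ≥ 0 := by linarith [hle i]
    nlinarith [(hr i).2, hθ0]
  have hkey : (1 + ∑ i ∈ Shat, v i) * (θ - Rev r v Shat)
      = θ - ∑ i ∈ Shat, v i * (r i - θ) := by
    rw [Rev]
    have hd := hpos Shat
    field_simp
    have hsum : ∑ i ∈ Shat, v i * (r i - θ)
        = (∑ i ∈ Shat, r i * v i) - θ * ∑ i ∈ Shat, v i := by
      rw [Finset.mul_sum, ← Finset.sum_sub_distrib]
      exact Finset.sum_congr rfl fun i _ => by ring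
    rw [hsum]; ring
  rw [hkey]
  have hsplit : ∑ i ∈ Shat, vhat i * (r i - θ)
      = ∑ i ∈ Shat, v i * (r i - θ) + ∑ i ∈ Shat, (vhat i - v i) * (r i - θ) := by
    rw [← Finset.sum_add_distrib]
    exact Finset.sum_congr rfl fun i _ => by ring
  linarith
end

section
/- Let p ∈ (0,1), let m ≥ 1 be an integer, and let x_1, …, x_m be independent identically distributed geometric random variables with parameter p, i.e., Pr[x_i = k] = p(1−p)^k for every non-negative integer k. Then Pr[Σ_{i=1}^m x_i < m(1−p)/(2p)] ≤ exp(−m(1−p)/8). -/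
open MeasureTheory ProbabilityTheory

section Aux

private lemma geom_log_one_add_ge (u : ℝ) (hu : 0 ≤ u) : u / (1 + u) ≤ Real.log (1 + u) := by
  have h1 : (0:ℝ) < 1 + u := by linarith
  have := Real.log_le_sub_one_of_pos (x := (1+u)⁻¹) (by positivity)
  rw [Real.log_inv] at this
  have : -((1+u)⁻¹ - 1) ≤ Real.log (1+u) := by linarith
  calc u / (1+u) = -((1+u)⁻¹ - 1) := by field_simp; ring
  _ ≤ _ := this

private lemma geom_convF : ConvexOn ℝ (Set.Icc (0:ℝ) 1)
    (fun x => (1+x) * Real.log (1+x) - x^2/4) := by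
  have hD : Convex ℝ (Set.Icc (0:ℝ) 1) := convex_Icc 0 1
  have hderiv : ∀ x ∈ interior (Set.Icc (0:ℝ) 1),
      HasDerivAt (fun x => (1+x) * Real.log (1+x) - x^2/4)
        (Real.log (1+x) + 1 - x/2) x := by
    intro x hx
    rw [interior_Icc] at hx
    have hx0 : (0:ℝ) < 1 + x := by have := hx.1; linarith
    have h1 : HasDerivAt (fun x : ℝ => 1 + x) 1 x := by
      simpa using (hasDerivAt_id x).const_add 1
    have h2 : HasDerivAt (fun x : ℝ => Real.log (1+x)) (1/(1+x)) x := by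
      simpa using (h1.log hx0.ne')
    have h3 : HasDerivAt (fun x : ℝ => (1+x) * Real.log (1+x))
        (1 * Real.log (1+x) + (1+x) * (1/(1+x))) x := h1.mul h2
    have h4 : HasDerivAt (fun x : ℝ => x^2/4) (x/2) x := by
      have := (hasDerivAt_pow 2 x).div_const 4
      simpa using this.congr_deriv (by ring)
    have := h3.sub h4
    convert this using 1
    · rfl
    · rfl
    · rfl
    · rw [one_mul, mul_one_div_cancel hx0.ne']
  have hdiff : DifferentiableOn ℝ (fun x => (1+x) * Real.log (1+x) - x^2/4)
      (interior (Set.Icc (0:ℝ) 1)) :=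
    fun x hx => (hderiv x hx).differentiableAt.differentiableWithinAt
  have hcont : ContinuousOn (fun x => (1+x) * Real.log (1+x) - x^2/4)
      (Set.Icc (0:ℝ) 1) := by
    intro x hx
    have hx0 : (0:ℝ) < 1 + x := by have := hx.1; linarith
    exact (((continuous_const.add continuous_id).continuousAt.mul
      ((Real.continuousAt_log hx0.ne').comp
        (continuous_const.add continuous_id).continuousAt)).sub
      ((continuous_pow 2).div_const 4).continuousAt).continuousWithinAt
  refine MonotoneOn.convexOn_of_deriv hD hcont hdiff ?_
  intro a ha b hb hab
  rw [(hderiv a ha).deriv, (hderiv b hb).deriv]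
  rw [interior_Icc] at ha hb
  have hb1 : (0:ℝ) < 1 + b := by have := hb.1; linarith
  have ha1 : (0:ℝ) < 1 + a := by have := ha.1; linarith
  have key : (b - a)/(1+b) ≤ Real.log (1+b) - Real.log (1+a) := by
    have hu : 0 ≤ (b-a)/(1+a) := div_nonneg (by linarith) ha1.le
    have hlog := geom_log_one_add_ge ((b-a)/(1+a)) hu
    have heq1 : 1 + (b-a)/(1+a) = (1+b)/(1+a) := by field_simp; ring
    have heq2 : (b-a)/(1+a) / (1 + (b-a)/(1+a)) = (b-a)/(1+b) := by
      rw [heq1]; field_simp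
    rw [heq2, heq1, Real.log_div hb1.ne' ha1.ne'] at hlog
    exact hlog
  have h2 : (b - a)/2 ≤ (b - a)/(1+b) := by
    apply div_le_div_of_nonneg_left (by linarith) hb1
    · linarith [hb.2]
  linarith

private lemma geom_key_ineq {p : ℝ} (hp0 : 0 < p) (hp1 : p < 1) :
    (1+p) * Real.log (1+p) + p*(1-p)/4 ≤ 2*p*Real.log 2 := by
  set F : ℝ → ℝ := fun x => (1+x) * Real.log (1+x) - x^2/4 with hF
  have h0 : (0:ℝ) ∈ Set.Icc (0:ℝ) 1 := by constructor <;> norm_num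
  have h1 : (1:ℝ) ∈ Set.Icc (0:ℝ) 1 := by constructor <;> norm_num
  have hw : (1-p) + p = 1 := by ring
  have := geom_convF.2 h0 h1 (by linarith : (0:ℝ) ≤ 1 - p) hp0.le hw
  have hcomb : (1-p) • (0:ℝ) + p • (1:ℝ) = p := by simp
  rw [hcomb] at this
  simp only [smul_eq_mul] at this
  norm_num at this
  nlinarith

private lemma geom_mgf {Ω : Type*} [MeasurableSpace Ω] (μ : Measure Ω) [IsProbabilityMeasure μ]
    (p : ℝ) (hp0 : 0 < p) (hp1 : p < 1) (X : Ω → ℕ) (hX : Measurable X)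
    (hdist : ∀ k : ℕ, μ {ω | X ω = k} = ENNReal.ofReal (p * (1 - p) ^ k)) :
    mgf (fun ω => (X ω : ℝ)) μ (-Real.log (1+p)) = (1+p)/2 := by
  set t := -Real.log (1+p) with ht_def
  have h1p : (0:ℝ) < 1 + p := by linarith
  have hexp_t : Real.exp t = (1+p)⁻¹ := by
    rw [ht_def, Real.exp_neg, Real.exp_log h1p]
  have ht : t ≤ 0 := by
    rw [ht_def, neg_nonpos]
    exact Real.log_nonneg (by linarith)
  set ν := μ.map X with hν
  have hνprob : IsProbabilityMeasure ν := Measure.isProbabilityMeasure_map hX.aemeasurable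
  have hg : Measurable (fun k : ℕ => Real.exp (t * k)) := measurable_from_top
  have hbound : ∀ k : ℕ, ‖Real.exp (t * k)‖ ≤ 1 := by
    intro k
    rw [Real.norm_of_nonneg (Real.exp_pos _).le]
    calc Real.exp (t * k) ≤ Real.exp 0 := by
          apply Real.exp_le_exp.2
          exact mul_nonpos_of_nonpos_of_nonneg ht (Nat.cast_nonneg k)
      _ = 1 := Real.exp_zero
  have hint : Integrable (fun k : ℕ => Real.exp (t * k)) ν :=
    (integrable_const 1).mono' hg.aestronglyMeasurable (ae_of_all _ hbound)
  have hmap : mgf (fun ω => (X ω : ℝ)) μ t = ∫ k, Real.exp (t * k) ∂ν := by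
    rw [hν, integral_map hX.aemeasurable hg.aestronglyMeasurable]
    rfl
  have hsingleton : ∀ k : ℕ, (ν {k}).toReal = p * (1-p)^k := by
    intro k
    rw [hν, Measure.map_apply hX (measurableSet_singleton k)]
    have : X ⁻¹' {k} = {ω | X ω = k} := rfl
    rw [this, hdist k, ENNReal.toReal_ofReal]
    exact mul_nonneg hp0.le (pow_nonneg (by linarith) k)
  rw [hmap, integral_countable' hint]
  have hterm : ∀ k : ℕ, (ν {k}).toReal • Real.exp (t * k)
      = p * ((1-p) * (1+p)⁻¹)^k := by
    intro k
    rw [smul_eq_mul, hsingleton k, mul_comm t (k:ℝ), Real.exp_nat_mul, hexp_t,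
      mul_pow, mul_assoc]
  simp only [measureReal_def]
  rw [tsum_congr hterm]
  have hr : (0:ℝ) ≤ (1-p) * (1+p)⁻¹ := mul_nonneg (by linarith) (inv_nonneg.2 h1p.le)
  have hr1 : (1-p) * (1+p)⁻¹ < 1 := by
    rw [mul_inv_lt_iff₀ h1p]
    linarith
  rw [tsum_mul_left, tsum_geometric_of_lt_one hr hr1]
  rw [show 1 - (1-p) * (1+p)⁻¹ = 2*p/(1+p) by field_simp; ring]
  field_simp

end Aux

/-- concentration for sums of i.i.d. geometric random variables
(`Pr[x_i = k] = p (1-p)^k`): the sum is at least half its mean except with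
exponentially small probability. -/
theorem geometric_sum_lower_tail
    {Ω : Type*} [MeasurableSpace Ω] (μ : Measure Ω) [IsProbabilityMeasure μ]
    (p : ℝ) (hp0 : 0 < p) (hp1 : p < 1)
    (m : ℕ) (hm : 1 ≤ m)
    (X : Fin m → Ω → ℕ)
    (hmeas : ∀ i, Measurable (X i))
    (hindep : iIndepFun X μ)
    (hdist : ∀ (i : Fin m) (k : ℕ),
      μ {ω | X i ω = k} = ENNReal.ofReal (p * (1 - p) ^ k)) :
    μ {ω | (∑ i, (X i ω : ℝ)) < m * (1 - p) / (2 * p)}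
      ≤ ENNReal.ofReal (Real.exp (-(m : ℝ) * (1 - p) / 8)) := by
  have h1p : (0:ℝ) < 1 + p := by linarith
  set t := -Real.log (1+p) with ht_def
  have ht : t ≤ 0 := by
    rw [ht_def, neg_nonpos]
    exact Real.log_nonneg (by linarith)
  set a : ℝ := m * (1 - p) / (2 * p) with ha_def
  set Y : Fin m → Ω → ℝ := fun i ω => (X i ω : ℝ) with hY_def
  have hYmeas : ∀ i, Measurable (Y i) := fun i =>
    (measurable_from_top (α := ℕ) (f := fun n : ℕ => (n:ℝ))).comp (hmeas i)
  have hYindep : iIndepFun Y μ :=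
    hindep.comp (fun _ (n : ℕ) => (n : ℝ)) (fun _ => measurable_from_top)
  -- integrability of exp (t * ∑) : bounded by 1
  have hS_nonneg : ∀ ω, 0 ≤ (∑ i, Y i) ω := by
    intro ω
    rw [Finset.sum_apply]
    exact Finset.sum_nonneg fun i _ => Nat.cast_nonneg _
  have hSmeas : Measurable (∑ i, Y i) := by
    have heq : (∑ i, Y i) = fun ω => ∑ i, Y i ω := by
      funext ω; simp [Finset.sum_apply]
    rw [heq]
    exact Finset.measurable_sum _ fun i _ => hYmeas i
  have hint : Integrable (fun ω => Real.exp (t * (∑ i, Y i) ω)) μ := by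
    refine (integrable_const 1).mono'
      ((hSmeas.const_mul t).exp.aestronglyMeasurable) (ae_of_all _ fun ω => ?_)
    rw [Real.norm_of_nonneg (Real.exp_pos _).le]
    calc Real.exp (t * (∑ i, Y i) ω) ≤ Real.exp 0 :=
          Real.exp_le_exp.2 (mul_nonpos_of_nonpos_of_nonneg ht (hS_nonneg ω))
      _ = 1 := Real.exp_zero
  -- Chernoff
  have hchernoff := measure_le_le_exp_mul_mgf (μ := μ) (X := ∑ i, Y i) a ht hint
  rw [ProbabilityTheory.iIndepFun.mgf_sum hYindep hYmeas] at hchernoff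
  have hmgf : ∀ i : Fin m, mgf (Y i) μ t = (1+p)/2 := fun i =>
    geom_mgf μ p hp0 hp1 (X i) (hmeas i) (hdist i)
  rw [Finset.prod_congr rfl (fun i _ => hmgf i), Finset.prod_const,
    Finset.card_univ, Fintype.card_fin] at hchernoff
  -- numeric bound
  have hhalf : (0:ℝ) < (1+p)/2 := by linarith
  have hrhs : Real.exp (-t * a) * ((1+p)/2) ^ m ≤ Real.exp (-(m : ℝ) * (1 - p) / 8) := by
    have hpow : ((1+p)/2) ^ m = Real.exp (m * Real.log ((1+p)/2)) := by
      rw [Real.exp_nat_mul, Real.exp_log hhalf]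
    rw [hpow, ← Real.exp_add, Real.exp_le_exp]
    have hlog2 : Real.log ((1+p)/2) = Real.log (1+p) - Real.log 2 := by
      rw [Real.log_div h1p.ne' (by norm_num)]
    rw [hlog2]
    have hkey := geom_key_ineq hp0 hp1
    have hm1 : (1:ℝ) ≤ m := by exact_mod_cast hm
    have hbr : Real.log (1+p) * ((1-p)/(2*p)) + (Real.log (1+p) - Real.log 2)
        + (1-p)/8 ≤ 0 := by
      have h2p : (0:ℝ) < 2*p := by linarith
      have : Real.log (1+p) * ((1-p)/(2*p)) + (Real.log (1+p) - Real.log 2) + (1-p)/8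
          = ((1+p) * Real.log (1+p) + p*(1-p)/4 - 2*p*Real.log 2) / (2*p) := by
        field_simp
        ring
      rw [this]
      exact div_nonpos_of_nonpos_of_nonneg (by linarith) h2p.le
    have hexpand : -t * a + (m:ℝ) * (Real.log (1+p) - Real.log 2)
        = (m:ℝ) * (Real.log (1+p) * ((1-p)/(2*p)) + (Real.log (1+p) - Real.log 2)) := by
      rw [ht_def, ha_def]
      ring
    rw [hexpand]
    have := mul_le_mul_of_nonneg_left hbr (by positivity : (0:ℝ) ≤ (m:ℝ))
    rw [mul_zero] at this
    calc (m:ℝ) * (Real.log (1+p) * ((1-p)/(2*p)) + (Real.log (1+p) - Real.log 2))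
        = (m:ℝ) * (Real.log (1+p) * ((1-p)/(2*p)) + (Real.log (1+p) - Real.log 2)
            + (1-p)/8) - (m:ℝ) * ((1-p)/8) := by ring
      _ ≤ 0 - (m:ℝ) * ((1-p)/8) := by linarith
      _ = -(m:ℝ) * (1-p) / 8 := by ring
  -- conclude
  have hsub : {ω | (∑ i, (X i ω : ℝ)) < a} ⊆ {ω | (∑ i, Y i) ω ≤ a} := by
    intro ω hω
    simp only [Set.mem_setOf_eq, Finset.sum_apply]
    exact le_of_lt hω
  calc μ {ω | (∑ i, (X i ω : ℝ)) < a} ≤ μ {ω | (∑ i, Y i) ω ≤ a} := measure_mono hsub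
    _ = ENNReal.ofReal ((μ {ω | (∑ i, Y i) ω ≤ a}).toReal) :=
        (ENNReal.ofReal_toReal (measure_ne_top _ _)).symm
    _ ≤ ENNReal.ofReal (Real.exp (-(m : ℝ) * (1 - p) / 8)) :=
        ENNReal.ofReal_le_ofReal (hchernoff.trans hrhs)
end

section
/- Let N ≥ 1 and K ∈ {0,…,N}, and let ρ and ρ' be two permutations (rankings) of [N] = {1,…,N}. Define S = {i ∈ [N] : ρ(i) ≤ K} and S' = {i ∈ [N] : ρ'(i) ≤ K}. Then the number of ordered pairs (i, j) ∈ [N] × [N] whose relative order differs under the two rankings, i.e., |{(i,j) : 1[ρ(i) > ρ(j)] ≠ 1[ρ'(i) > ρ'(j)]}|, is at least (|S ⊕ S'| / 2)²; equivalently, 4 · |{(i,j) ∈ [N] × [N] : 1[ρ(i) > ρ(j)] ≠ 1[ρ'(i) > ρ'(j)]}| ≥ |S ⊕ S'|². -/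
/-- if `S` and `S'` are the sets of top-`K` items under two
rankings `ρ` and `ρ'`, then the number of ordered pairs whose relative order
differs between the two rankings is at least `(|S ⊕ S'| / 2)²`, i.e.
`4 · #{(i,j) : order differs} ≥ |S ⊕ S'|²`. -/
theorem inversions_lower_bound_symmDiff
    (N K : ℕ) (hN : 1 ≤ N) (hKN : K ≤ N)
    (ρ ρ' : Equiv.Perm (Fin N))
    (S S' : Finset (Fin N))
    (hS : S = Finset.univ.filter fun i => (ρ i : ℕ) < K)
    (hS' : S' = Finset.univ.filter fun i => (ρ' i : ℕ) < K) :
    (symmDiff S S').card ^ 2 ≤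
      4 * (Finset.univ.filter fun ij : Fin N × Fin N =>
        ¬((ρ ij.1 > ρ ij.2) ↔ (ρ' ij.1 > ρ' ij.2))).card := by
  classical
  -- card of top-K set is K
  have key : ∀ σ : Equiv.Perm (Fin N),
      (Finset.univ.filter fun i => (σ i : ℕ) < K).card = K := by
    intro σ
    have h1 : (Finset.univ.filter fun i => (σ i : ℕ) < K)
        = (Finset.univ.filter fun j : Fin N => (j : ℕ) < K).map
            σ.symm.toEmbedding := by
      ext i
      simp [Finset.mem_map, Equiv.symm_apply_eq]
    have h2 : (Finset.univ.filter fun j : Fin N => (j : ℕ) < K)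
        = (Finset.univ : Finset (Fin K)).map (Fin.castLEEmb hKN) := by
      ext j
      simp only [Finset.mem_filter, Finset.mem_univ, true_and, Finset.mem_map,
        Fin.castLEEmb, Function.Embedding.coeFn_mk]
      constructor
      · intro h
        exact ⟨⟨j, h⟩, rfl⟩
      · rintro ⟨a, -, rfl⟩; exact a.isLt
    rw [h1, Finset.card_map, h2, Finset.card_map, Finset.card_univ,
      Fintype.card_fin]
  have hScard : S.card = K := by rw [hS]; exact key ρ
  have hS'card : S'.card = K := by rw [hS']; exact key ρ'
  have h1 := Finset.card_sdiff_add_card_inter S S'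
  have h2 := Finset.card_sdiff_add_card_inter S' S
  rw [Finset.inter_comm S' S] at h2
  have hAB : (S \ S').card = (S' \ S).card := by omega
  -- (S\S') × (S'\S) is contained in the differing pairs
  have hsub : (S \ S') ×ˢ (S' \ S) ⊆ (Finset.univ.filter fun ij : Fin N × Fin N =>
      ¬((ρ ij.1 > ρ ij.2) ↔ (ρ' ij.1 > ρ' ij.2))) := by
    intro ij hij
    rw [Finset.mem_product] at hij
    obtain ⟨hi, hj⟩ := hij
    rw [hS, hS', Finset.mem_sdiff, Finset.mem_filter, Finset.mem_filter] at hi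
    rw [hS, hS', Finset.mem_sdiff, Finset.mem_filter, Finset.mem_filter] at hj
    simp only [Finset.mem_univ, true_and, not_lt] at hi hj
    simp only [Finset.mem_filter, Finset.mem_univ, true_and]
    intro h
    have h1 : ¬ (ρ ij.1 > ρ ij.2) := by
      simp only [gt_iff_lt, not_lt, Fin.le_def]
      omega
    have h2 : ρ' ij.1 > ρ' ij.2 := by
      simp only [gt_iff_lt, Fin.lt_def]
      omega
    exact h1 (h.mpr h2)
  have hcard : (symmDiff S S').card = (S \ S').card + (S' \ S).card := by
    rw [symmDiff_def, Finset.sup_eq_union,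
      Finset.card_union_of_disjoint disjoint_sdiff_sdiff]
  have hprod : ((S \ S') ×ˢ (S' \ S)).card = (S \ S').card * (S' \ S).card :=
    Finset.card_product _ _
  have hle := Finset.card_le_card hsub
  rw [hcard, ← hAB]
  nlinarith [hle, hprod, hAB]
end
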